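/- Under the assumptions 0 < ā² < c² < 1 < a², M̄ > 0, there exists B* > 0 with B* ≥ B_c := M̄ log(a²)/log(c²/ā²) such that F**(U(B*)) = 0 and F**(U(B)) < 0 for all B > B*, where U(B) and F** are as defined via the crossing points of the functions f₁ and f₂. -/

import Mathlib

/-- `b^{2s} := exp(2 s log b)` -/
noncomputable def pw (b s : ℝ) : ℝ := Real.exp (2 * s * Real.log b)

/-- `s**(y) = (log y - log B)/log(1/c²)` -/
noncomputable def sstar2 (c B y : ℝ) : ℝ := (Real.log y - Real.log B) / Real.log (1 / c ^ 2)

/-- `F**(y) = ā^{2 s**(y)} y + M̄ (a^{2 s**(y)} - 1) - B` -/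
noncomputable def Fstar2 (a abar c M B y : ℝ) : ℝ :=
  pw abar (sstar2 c B y) * y + M * (pw a (sstar2 c B y) - 1) - B

/-- `U(B)`, defined by `log U(B) = (P₁/P₂) log B + P₃P₄/P₂`. -/
noncomputable def Ufun (a abar c M B : ℝ) : ℝ :=
  Real.exp (Real.log (a ^ 2 / abar ^ 2) / Real.log (a ^ 2 * c ^ 2 / abar ^ 2) * Real.log B +
    Real.log (1 / c ^ 2) * Real.log (Real.log (1 / abar ^ 2) / (M * Real.log (a ^ 2))) /
      Real.log (a ^ 2 * c ^ 2 / abar ^ 2))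

lemma key_eq (a abar c M : ℝ)
    (ha : 0 < a) (habar : 0 < abar) (hc : 0 < c) (hM : 0 < M)
    (h1 : abar ^ 2 < c ^ 2) (h2 : c ^ 2 < 1) (h3 : 1 < a ^ 2)
    (B : ℝ) :
    Fstar2 a abar c M B (Ufun a abar c M B) =
      Real.exp (Real.log (a^2) / (Real.log (a^2) + Real.log (c^2) - Real.log (abar^2)) * Real.log B
        - (Real.log (c^2) - Real.log (abar^2)) / (Real.log (a^2) + Real.log (c^2) - Real.log (abar^2))
          * Real.log (Real.log (1/abar^2) / (M * Real.log (a^2))))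
      + M * Real.exp (Real.log (a^2) / (Real.log (a^2) + Real.log (c^2) - Real.log (abar^2))
          * (Real.log B + Real.log (Real.log (1/abar^2) / (M * Real.log (a^2)))))
      - M - B := by
  have ha2 : (0:ℝ) < a^2 := by positivity
  have hab2 : (0:ℝ) < abar^2 := by positivity
  have hc2 : (0:ℝ) < c^2 := by positivity
  have hla : 0 < Real.log (a^2) := Real.log_pos h3
  have hlc : Real.log (c^2) < 0 := Real.log_neg hc2 h2
  have hlb : Real.log (abar^2) < Real.log (c^2) := Real.log_lt_log hab2 h1
  have hd1 : Real.log (a^2/abar^2) = Real.log (a^2) - Real.log (abar^2) :=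
    Real.log_div (ne_of_gt ha2) (ne_of_gt hab2)
  have hd2 : Real.log (a^2*c^2/abar^2) = Real.log (a^2) + Real.log (c^2) - Real.log (abar^2) := by
    rw [Real.log_div (by positivity) (ne_of_gt hab2), Real.log_mul (ne_of_gt ha2) (ne_of_gt hc2)]
  have hd3 : Real.log (1/c^2) = -Real.log (c^2) := by
    rw [one_div, Real.log_inv]
  have hloga : Real.log a = Real.log (a^2) / 2 := by
    rw [Real.log_pow]; push_cast; ring
  have hlogab : Real.log abar = Real.log (abar^2) / 2 := by
    rw [Real.log_pow]; push_cast; ring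
  simp only [Fstar2, Ufun, pw, sstar2, Real.log_exp, hd1, hd2, hd3, hloga, hlogab]
  set la := Real.log (a^2)
  set lb := Real.log (abar^2)
  set lc := Real.log (c^2)
  set x := Real.log B
  set p4 := Real.log (Real.log (1/abar^2) / (M * la))
  have h0c : lc ≠ 0 := ne_of_lt hlc
  have h0p : la + lc - lb ≠ 0 := by intro h; nlinarith
  rw [← Real.exp_add]
  rw [show 2 * (((la - lb) / (la + lc - lb) * x + -lc * p4 / (la + lc - lb) - x) / -lc) * (lb / 2)
        + ((la - lb) / (la + lc - lb) * x + -lc * p4 / (la + lc - lb))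
      = la / (la + lc - lb) * x - (lc - lb) / (la + lc - lb) * p4 from by field_simp; ring]
  rw [show 2 * (((la - lb) / (la + lc - lb) * x + -lc * p4 / (la + lc - lb) - x) / -lc) * (la / 2)
      = la / (la + lc - lb) * (x + p4) from by field_simp; ring]
  ring

/-- existence of `B* ≥ B_c` with `F**(U(B*)) = 0` and `F**(U(B)) < 0` for
`B > B*`. -/
theorem exists_Bstar (a abar c M : ℝ)
    (ha : 0 < a) (habar : 0 < abar) (hc : 0 < c) (hM : 0 < M)
    (h1 : abar ^ 2 < c ^ 2) (h2 : c ^ 2 < 1) (h3 : 1 < a ^ 2) :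
    ∃ Bstar : ℝ, 0 < Bstar ∧
      M * Real.log (a ^ 2) / Real.log (c ^ 2 / abar ^ 2) ≤ Bstar ∧
      Fstar2 a abar c M Bstar (Ufun a abar c M Bstar) = 0 ∧
      ∀ B : ℝ, Bstar < B → Fstar2 a abar c M B (Ufun a abar c M B) < 0 := by
  have ha2 : (0:ℝ) < a^2 := by positivity
  have hab2 : (0:ℝ) < abar^2 := by positivity
  have hc2 : (0:ℝ) < c^2 := by positivity
  have hla : 0 < Real.log (a^2) := Real.log_pos h3
  have hlc : Real.log (c^2) < 0 := Real.log_neg hc2 h2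
  have hlb : Real.log (abar^2) < Real.log (c^2) := Real.log_lt_log hab2 h1
  set la := Real.log (a^2) with hla_def
  set lb := Real.log (abar^2) with hlb_def
  set lc := Real.log (c^2) with hlc_def
  have hp2 : 0 < la + lc - lb := by linarith
  set α := la / (la + lc - lb) with hα_def
  set β := (lc - lb) / (la + lc - lb) with hβ_def
  have hαpos : 0 < α := div_pos hla hp2
  have hβpos : 0 < β := div_pos (by linarith) hp2
  have hαβ : α + β = 1 := by
    rw [hα_def, hβ_def, ← add_div]
    field_simp
    ring
  set p4 := Real.log (Real.log (1/abar^2) / (M * la)) with hp4_def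
  set f : ℝ → ℝ := fun t => Real.exp (α * t - β * p4) + M * Real.exp (α * (t + p4)) - M - Real.exp t
    with hf_def
  have key : ∀ B : ℝ, 0 < B → Fstar2 a abar c M B (Ufun a abar c M B) = f (Real.log B) := by
    intro B hB
    simp only [hf_def, hα_def, hβ_def, hp4_def, hla_def, hlb_def, hlc_def]
    rw [key_eq a abar c M ha habar hc hM h1 h2 h3 B, Real.exp_log hB]
  have hfc : Continuous f := by
    simp only [hf_def]; fun_prop
  have hzero : f (-p4) = 0 := by
    simp only [hf_def]
    rw [show α * (-p4) - β * p4 = -p4 by linear_combination (-p4) * hαβ,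
      show α * (-p4 + p4) = 0 by ring, Real.exp_zero]
    ring
  set T := max ((Real.log 2 - β * p4) / β) ((Real.log 2 + Real.log M + α * p4) / β) with hT_def
  have hbig : ∀ t : ℝ, T ≤ t → f t < 0 := by
    intro t ht
    have ht1 : (Real.log 2 - β * p4) / β ≤ t := le_trans (le_max_left _ _) ht
    have ht2 : (Real.log 2 + Real.log M + α * p4) / β ≤ t := le_trans (le_max_right _ _) ht
    rw [div_le_iff₀ hβpos] at ht1 ht2
    have htt : α * t + β * t = t := by linear_combination t * hαβ
    have hhalf : Real.exp t / 2 = Real.exp (t - Real.log 2) := by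
      rw [Real.exp_sub, Real.exp_log two_pos]
    have e1 : Real.exp (α * t - β * p4) ≤ Real.exp t / 2 := by
      rw [hhalf]
      exact Real.exp_le_exp.mpr (by linarith)
    have e2 : M * Real.exp (α * (t + p4)) ≤ Real.exp t / 2 := by
      rw [show M * Real.exp (α * (t + p4)) = Real.exp (Real.log M + α * (t + p4)) by
        rw [Real.exp_add, Real.exp_log hM], hhalf]
      have hexpand : α * (t + p4) = α * t + α * p4 := by ring
      exact Real.exp_le_exp.mpr (by linarith [hexpand])
    simp only [hf_def]
    linarith [e1, e2, hM]
  set S : Set ℝ := {t : ℝ | f t = 0} with hS_def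
  have hmem : (-p4) ∈ S := hzero
  have hbdd : BddAbove S := ⟨T, fun t htS => by
    by_contra hcon
    push_neg at hcon
    exact absurd htS (ne_of_lt (hbig t hcon.le))⟩
  have hSne : S.Nonempty := ⟨_, hmem⟩
  have hclosed : IsClosed S := isClosed_eq hfc continuous_const
  have hsup_mem : sSup S ∈ S := hclosed.csSup_mem hSne hbdd
  have hlt : ∀ t : ℝ, sSup S < t → f t < 0 := by
    intro t ht
    rcases lt_trichotomy (f t) 0 with h | h | h
    · exact h
    · exact absurd (le_csSup hbdd h) (not_le.mpr ht)
    · exfalso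
      have h2' : t ≤ max t T := le_max_left _ _
      have h1' : f (max t T) < 0 := hbig _ (le_max_right _ _)
      obtain ⟨z, hz, hz0⟩ := intermediate_value_Icc' h2' hfc.continuousOn
        (Set.mem_Icc.mpr ⟨h1'.le, h.le⟩)
      have hzS : z ≤ sSup S := le_csSup hbdd hz0
      linarith [hz.1]
  -- the B_c lower bound
  have hQ : 0 < lc - lb := by linarith
  have hlbneg : 0 < -lb := by linarith
  have hMla : 0 < M * la := by positivity
  have hBcpos : 0 < M * la / (lc - lb) := by positivity
  have hp4eq : p4 = Real.log (-lb) - Real.log (M * la) := by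
    rw [hp4_def, show Real.log (1/abar^2) = -lb by rw [one_div, Real.log_inv, hlb_def]]
    exact Real.log_div (ne_of_gt hlbneg) (ne_of_gt hMla)
  have hlBc : Real.log (M * la / (lc - lb)) = Real.log (M * la) - Real.log (lc - lb) :=
    Real.log_div (ne_of_gt hMla) (ne_of_gt hQ)
  have hlr : Real.log ((-lb) / (lc - lb)) = Real.log (-lb) - Real.log (lc - lb) :=
    Real.log_div (ne_of_gt hlbneg) (ne_of_gt hQ)
  set lr := Real.log ((-lb) / (lc - lb)) with hlr_def
  have hfBc : 0 ≤ f (Real.log (M * la / (lc - lb))) := by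
    have ei : α * Real.log (M * la / (lc - lb)) - β * p4
        = Real.log (M * la / (lc - lb)) - β * lr := by
      rw [hp4eq, hlBc, hlr]
      linear_combination (Real.log (M * la) - Real.log (lc - lb)) * hαβ
    have eii : α * (Real.log (M * la / (lc - lb)) + p4) = α * lr := by
      rw [hp4eq, hlBc, hlr]; ring
    simp only [hf_def]
    rw [ei, eii,
      show Real.log (M * la / (lc - lb)) - β * lr
        = Real.log (M * la / (lc - lb)) + -(β * lr) by ring,
      Real.exp_add, Real.exp_log hBcpos]
    have conv : Real.exp (β * (α * lr) + α * (-(β * lr)))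
        ≤ β * Real.exp (α * lr) + α * Real.exp (-(β * lr)) := by
      have := convexOn_exp.2 (Set.mem_univ (α * lr)) (Set.mem_univ (-(β * lr)))
        hβpos.le hαpos.le (by linarith [hαβ])
      simpa [smul_eq_mul] using this
    rw [show β * (α * lr) + α * (-(β * lr)) = 0 by ring, Real.exp_zero] at conv
    have hBcβ : M * la / (lc - lb) * β = M * α := by
      rw [hα_def, hβ_def]
      field_simp
    have h5 : β * (M * la / (lc - lb) * Real.exp (-(β * lr)) + M * Real.exp (α * lr) - M
          - M * la / (lc - lb))
        = M * (β * Real.exp (α * lr) + α * Real.exp (-(β * lr)) - 1) := by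
      linear_combination (Real.exp (-(β * lr)) - 1) * hBcβ - M * hαβ
    have h6 : 0 ≤ M * (β * Real.exp (α * lr) + α * Real.exp (-(β * lr)) - 1) :=
      mul_nonneg hM.le (by linarith [conv])
    nlinarith [h5, h6, hβpos]
  have hBcle : Real.log (M * la / (lc - lb)) ≤ sSup S := by
    by_contra hcon
    push_neg at hcon
    exact absurd hfBc (not_le.mpr (hlt _ hcon))
  refine ⟨Real.exp (sSup S), Real.exp_pos _, ?_, ?_, ?_⟩
  · rw [Real.log_div (ne_of_gt hc2) (ne_of_gt hab2), ← hlc_def, ← hlb_def]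
    calc M * la / (lc - lb) = Real.exp (Real.log (M * la / (lc - lb))) :=
          (Real.exp_log hBcpos).symm
      _ ≤ Real.exp (sSup S) := Real.exp_le_exp.mpr hBcle
  · rw [key _ (Real.exp_pos _), Real.log_exp]
    exact hsup_mem
  · intro B hB
    have hBpos : 0 < B := lt_trans (Real.exp_pos _) hB
    rw [key _ hBpos]
    exact hlt _ ((Real.lt_log_iff_exp_lt hBpos).mpr hB)
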